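/- Let f(x) be a monic irreducible polynomial over ℚ of degree n ≥ 4 whose Galois group, acting on the roots α_1, ..., α_n, is the alternating group A_n. If rational numbers m_1, ..., m_n, m satisfy ∑ m_i α_i = m, then m_1 = m_2 = ... = m_n. -/

import Mathlib

open Polynomial Finset

theorem stmt_4 (n : ℕ) (hn : 4 ≤ n) (K : Type*) [Field K] [Algebra ℚ K]
    (f : Polynomial ℚ) (hmonic : f.Monic) (hirr : Irreducible f) (hdeg : f.natDegree = n)
    (α : Fin n → K)
    (hroots : f.map (algebraMap ℚ K) = ∏ i, (Polynomial.X - Polynomial.C (α i)))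
    (hGal : {σ : Equiv.Perm (Fin n) | ∃ g : K ≃ₐ[ℚ] K, ∀ i, g (α i) = α (σ i)}
      = (alternatingGroup (Fin n) : Set (Equiv.Perm (Fin n))))
    (m : Fin n → ℚ) (m0 : ℚ)
    (hrel : ∑ i, algebraMap ℚ K (m i) * α i = algebraMap ℚ K m0) :
    ∀ i j, m i = m j := by
  set A := algebraMap ℚ K with hAdef
  -- roots are distinct
  have hαinj : Function.Injective α := by
    have hsep : f.Separable := hirr.separable
    have hsep2 : (f.map (algebraMap ℚ K)).Separable := hsep.map
    rw [hroots] at hsep2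
    have hnd := Polynomial.nodup_roots hsep2
    have hr : (∏ i, (X - C (α i))).roots = Finset.univ.val.map α := by
      rw [Finset.prod_eq_multiset_prod,
        show (Multiset.map (fun i => X - C (α i)) Finset.univ.val)
          = Multiset.map (fun a => X - C a) (Multiset.map α Finset.univ.val) by
            rw [Multiset.map_map]; rfl,
        Polynomial.roots_multiset_prod_X_sub_C]
    rw [hr] at hnd
    intro a b hab
    exact Multiset.inj_on_of_nodup_map hnd a (by simp) b (by simp) hab
  -- permuted relations
  have key : ∀ τ : Equiv.Perm (Fin n), τ ∈ alternatingGroup (Fin n) →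
      ∑ s, A (m (τ s)) * α s = A m0 := by
    intro τ hτ
    have hτ' : τ⁻¹ ∈ alternatingGroup (Fin n) := inv_mem hτ
    have hmem : τ⁻¹ ∈ {σ : Equiv.Perm (Fin n) | ∃ g : K ≃ₐ[ℚ] K, ∀ i, g (α i) = α (σ i)} := by
      rw [hGal]; exact hτ'
    obtain ⟨g, hg⟩ := hmem
    have h1 : ∑ s, A (m (τ s)) * α (τ s) = A m0 := by
      rw [Equiv.sum_comp τ (fun t => A (m t) * α t)]; exact hrel
    calc ∑ s, A (m (τ s)) * α s
        = ∑ s, g (A (m (τ s)) * α (τ s)) := by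
          refine Finset.sum_congr rfl fun s _ => ?_
          rw [map_mul, g.commutes, hg, ← Equiv.Perm.mul_apply, inv_mul_cancel, Equiv.Perm.one_apply]
      _ = g (∑ s, A (m (τ s)) * α (τ s)) := (map_sum g _ _).symm
      _ = A m0 := by rw [h1, g.commutes]
  intro i j
  by_contra hmne
  have hij : i ≠ j := fun h => hmne (by rw [h])
  -- pick k outside {i,j}
  have hk : ∃ k : Fin n, k ≠ i ∧ k ≠ j := by
    have h2 : ¬ (Finset.univ : Finset (Fin n)) ⊆ {i, j} := by
      intro hsub
      have := Finset.card_le_card hsub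
      simp only [Finset.card_univ, Fintype.card_fin] at this
      have h3 : ({i, j} : Finset (Fin n)).card ≤ 2 := (Finset.card_insert_le _ _).trans (by simp)
      omega
    obtain ⟨k, -, hk⟩ := Finset.not_subset.mp h2
    exact ⟨k, fun h => hk (by simp [h]), fun h => hk (by simp [h])⟩
  obtain ⟨k, hki, hkj⟩ := hk
  set σ : Equiv.Perm (Fin n) := Equiv.swap i k * Equiv.swap i j with hσdef
  have hσmem : σ ∈ alternatingGroup (Fin n) := by
    rw [Equiv.Perm.mem_alternatingGroup, hσdef, map_mul,
      Equiv.Perm.sign_swap hki.symm, Equiv.Perm.sign_swap hij]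
    decide
  have hσi : σ i = j := by
    simp [hσdef, Equiv.Perm.mul_apply, Equiv.swap_apply_left,
      Equiv.swap_apply_of_ne_of_ne hij.symm hkj.symm]
  have hσj : σ j = k := by
    simp [hσdef, Equiv.Perm.mul_apply, Equiv.swap_apply_of_ne_of_ne hij.symm hkj.symm,
      Equiv.swap_apply_right, Equiv.swap_apply_left]
  have hσk : σ k = i := by
    simp [hσdef, Equiv.Perm.mul_apply, Equiv.swap_apply_of_ne_of_ne hki hkj,
      Equiv.swap_apply_right]
  have hσother : ∀ s, s ≠ i → s ≠ j → s ≠ k → σ s = s := by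
    intro s hsi hsj hsk
    simp [hσdef, Equiv.Perm.mul_apply, Equiv.swap_apply_of_ne_of_ne hsi hsj,
      Equiv.swap_apply_of_ne_of_ne hsi hsk]
  have hσ2 : σ * σ ∈ alternatingGroup (Fin n) := mul_mem hσmem hσmem
  set u : ℚ := m j - m i with hu
  set v : ℚ := m k - m j with hv
  set c : Fin n → ℚ := fun s => (-u) * m s + (-v) * m (σ s) + (u + v) * m ((σ * σ) s) with hc
  have hsum : ∑ s, A (c s) * α s = 0 := by
    have e1 := hrel
    have e2 := key σ hσmem
    have e3 := key (σ * σ) hσ2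
    calc ∑ s, A (c s) * α s
        = A (-u) * ∑ s, A (m s) * α s + (A (-v) * ∑ s, A (m (σ s)) * α s
            + A (u + v) * ∑ s, A (m ((σ * σ) s)) * α s) := by
          rw [Finset.mul_sum, Finset.mul_sum, Finset.mul_sum, ← Finset.sum_add_distrib,
            ← Finset.sum_add_distrib]
          refine Finset.sum_congr rfl fun s _ => ?_
          simp only [hc, map_add, map_mul]
          ring
      _ = A ((-u) * m0) + (A ((-v) * m0) + A ((u + v) * m0)) := by
          rw [e1, e2, e3, ← map_mul, ← map_mul, ← map_mul]
      _ = 0 := by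
          rw [← map_add, ← map_add, show (-u) * m0 + ((-v) * m0 + (u + v) * m0) = 0 by ring,
            map_zero]
  have hczero : ∀ s ∈ Finset.univ, s ∉ ({i, j} : Finset (Fin n)) → A (c s) * α s = 0 := by
    intro s _ hs
    simp only [Finset.mem_insert, Finset.mem_singleton, not_or] at hs
    obtain ⟨hsi, hsj⟩ := hs
    have : c s = 0 := by
      by_cases hsk : s = k
      · subst hsk
        simp only [hc, hσk, Equiv.Perm.mul_apply, hσk, hσi, hu, hv]
        ring
      · simp only [hc, Equiv.Perm.mul_apply, hσother s hsi hsj hsk]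
        ring
    rw [this, map_zero, zero_mul]
  have hsum2 : A (c i) * α i + A (c j) * α j = 0 := by
    have h := Finset.sum_subset (Finset.subset_univ ({i, j} : Finset (Fin n))) hczero
    rw [Finset.sum_pair hij] at h
    rw [h]; exact hsum
  have hci : c i = u * u + u * v + v * v := by
    simp only [hc, hσi, Equiv.Perm.mul_apply, hσi, hσj, hu, hv]
    ring
  have hcj : c j = -(u * u + u * v + v * v) := by
    simp only [hc, hσj, Equiv.Perm.mul_apply, hσj, hσk, hu, hv]
    ring
  have hune : u ≠ 0 := sub_ne_zero.mpr (Ne.symm hmne)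
  have hDne : u * u + u * v + v * v ≠ 0 := by
    intro h
    have h1 : 0 < u * u := mul_self_pos.mpr hune
    nlinarith [sq_nonneg (2 * u + v), sq_nonneg v]
  have hαeq : α i = α j := by
    rw [hci, hcj, map_neg] at hsum2
    have h5 : A (u * u + u * v + v * v) * (α i - α j) = 0 := by
      rw [mul_sub]; linear_combination hsum2
    rcases mul_eq_zero.mp h5 with h | h
    · exact absurd ((_root_.map_eq_zero A).mp h) hDne
    · exact sub_eq_zero.mp h
  exact hmne (by rw [hαinj hαeq])
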